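/- arXiv:2104.13315 — 3 statements merged into one kernel-verified Lean document; each statement's English description precedes it below -/
import Mathlib

section
/- For sets of predicates P ⊆ P* (both containing the predicate true) and any expression e of a DSL and any input x, the concrete value semantics implies the abstract semantics under P*, and the abstract semantics under P* implies the abstract semantics under P; i.e., (s = ⟦e⟧x) ⟹ ⟦e⟧^{P*}x and ⟦e⟧^{P*}x ⟹ ⟦e⟧^P x. In other words, adding predicates makes abstract execution more precise while remaining sound. -/
/-- Expressions of a DSL: terminals (constants or the input variable, whose
concrete value on a given input is given by `tsem`) and function applications. -/
inductive Expr (τ σ : Type) : Type where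
  | term : τ → Expr τ σ
  | app : σ → List (Expr τ σ) → Expr τ σ

/-- Abstraction map: strongest conjunction (intersection) of predicates in `P`
implied by the abstract value `φ` (predicates modeled by their denotations). -/
def alphaP {V : Type} (P : Set (Set V)) (φ : Set V) : Set V :=
  ⋂₀ {q ∈ P | φ ⊆ q}

/-- Concrete execution semantics. -/
def concExec {V τ σ : Type} (tsem : τ → V) (fsem : σ → List V → V) :
    Expr τ σ → V
  | .term t => tsem t
  | .app f args => fsem f (args.attach.map (fun a => concExec tsem fsem a.1))
termination_by e => sizeOf e
decreasing_by have := List.sizeOf_lt_of_mem a.2; simp; omega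

/-- Abstract execution semantics under a predicate set `P`, using the abstract
transformer `F`. -/
def absExec {V τ σ : Type} (P : Set (Set V)) (tsem : τ → V)
    (F : σ → List (Set V) → Set V) : Expr τ σ → Set V
  | .term t => alphaP P {tsem t}
  | .app f args => alphaP P (F f (args.attach.map (fun a => absExec P tsem F a.1)))
termination_by e => sizeOf e
decreasing_by have := List.sizeOf_lt_of_mem a.2; simp; omega


lemma subset_alphaP {V : Type} (P : Set (Set V)) (φ : Set V) : φ ⊆ alphaP P φ := by
  intro x hx q hq
  exact hq.2 hx

lemma alphaP_mono {V : Type} (P : Set (Set V)) {φ ψ : Set V} (h : φ ⊆ ψ) :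
    alphaP P φ ⊆ alphaP P ψ := by
  intro x hx q hq
  exact hx q ⟨hq.1, h.trans hq.2⟩

lemma alphaP_anti {V : Type} {P Q : Set (Set V)} (h : P ⊆ Q) (φ : Set V) :
    alphaP Q φ ⊆ alphaP P φ := by
  intro x hx q hq
  exact hx q ⟨h hq.1, hq.2⟩

lemma stmt1_aux {V τ σ : Type} (P Pstar : Set (Set V))
    (hPP : P ⊆ Pstar)
    (tsem : τ → V) (fsem : σ → List V → V) (F : σ → List (Set V) → Set V)
    (hsound : ∀ (f : σ) (vs : List V) (φs : List (Set V)),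
      List.Forall₂ (fun v φ => v ∈ φ) vs φs → fsem f vs ∈ F f φs)
    (hmono : ∀ (f : σ) (φs ψs : List (Set V)),
      List.Forall₂ (fun φ ψ => φ ⊆ ψ) φs ψs → F f φs ⊆ F f ψs) :
    ∀ (n : ℕ) (e : Expr τ σ), sizeOf e ≤ n →
    concExec tsem fsem e ∈ absExec Pstar tsem F e ∧
      absExec Pstar tsem F e ⊆ absExec P tsem F e := by
  intro n
  induction n with
  | zero => intro e he; cases e <;> simp at he
  | succ n ih =>
    intro e he
    cases e with
    | term t =>
      rw [concExec, absExec, absExec]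
      exact ⟨subset_alphaP Pstar {tsem t} rfl, alphaP_anti hPP _⟩
    | app f args =>
      have hsz : ∀ a ∈ args, sizeOf a ≤ n := by
        intro a ha
        have := List.sizeOf_lt_of_mem ha
        simp at he ⊢
        omega
      have h1 : List.Forall₂ (fun v φ => v ∈ φ)
          (args.attach.map (fun a => concExec tsem fsem a.1))
          (args.attach.map (fun a => absExec Pstar tsem F a.1)) := by
        rw [List.forall₂_map_right_iff, List.forall₂_map_left_iff]
        apply List.forall₂_same.2
        intro a ha
        exact (ih a.1 (hsz a.1 a.2)).1
      have h2 : List.Forall₂ (fun φ ψ => φ ⊆ ψ)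
          (args.attach.map (fun a => absExec Pstar tsem F a.1))
          (args.attach.map (fun a => absExec P tsem F a.1)) := by
        rw [List.forall₂_map_right_iff, List.forall₂_map_left_iff]
        apply List.forall₂_same.2
        intro a ha
        exact (ih a.1 (hsz a.1 a.2)).2
      constructor
      · show concExec tsem fsem (.app f args) ∈ absExec Pstar tsem F (.app f args)
        rw [concExec, absExec]
        exact subset_alphaP Pstar _ (hsound f _ _ h1)
      · show absExec Pstar tsem F (.app f args) ⊆ absExec P tsem F (.app f args)
        rw [absExec, absExec]
        exact (alphaP_mono Pstar (hmono f _ _ h2)).trans (alphaP_anti hPP _)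

theorem stmt1 {V τ σ : Type} (P Pstar : Set (Set V))
    (htrue : Set.univ ∈ P) (hPP : P ⊆ Pstar)
    (tsem : τ → V) (fsem : σ → List V → V) (F : σ → List (Set V) → Set V)
    -- soundness of the abstract transformer
    (hsound : ∀ (f : σ) (vs : List V) (φs : List (Set V)),
      List.Forall₂ (fun v φ => v ∈ φ) vs φs → fsem f vs ∈ F f φs)
    -- monotonicity of the abstract transformer
    (hmono : ∀ (f : σ) (φs ψs : List (Set V)),
      List.Forall₂ (fun φ ψ => φ ⊆ ψ) φs ψs → F f φs ⊆ F f ψs)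
    (e : Expr τ σ) :
    concExec tsem fsem e ∈ absExec Pstar tsem F e ∧
      absExec Pstar tsem F e ⊆ absExec P tsem F e :=
  stmt1_aux P Pstar hPP tsem fsem F hsound hmono (sizeOf e) e le_rfl
end

section
/- Soundness of the synthesis algorithm's termination condition: suppose p* minimizes the abstract objective among all programs in G, i.e., for all p ∈ G, U(L(⟦p*⟧^P x⃗, y⃗), C(p*)) ≤ U(L(⟦p⟧^P x⃗, y⃗), C(p)), and suppose the abstract loss under-approximates the concrete loss for every program. If L(p*[x⃗], y⃗) − L(⟦p*⟧^P x⃗, y⃗) ≤ ε, then for all p ∈ G, U(L(p*[x⃗], y⃗) − ε, C(p*)) ≤ U(L(p[x⃗], y⃗), C(p)); that is, p* is ε-correct. -/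
/-- Soundness of the termination condition: if `p*` minimizes the abstract
objective, the abstract loss under-approximates the concrete loss, and the gap
between concrete and abstract loss at `p*` is at most `ε`, then `p*` is
ε-correct. Here `Lc p` is the concrete loss `L(p[x⃗], y⃗)`, `La p` the abstract
loss `L(⟦p⟧^P x⃗, y⃗)`, `C p` the complexity, and `U` the objective function,
monotonically non-decreasing in each argument, valued in a total order `T`. -/
theorem stmt5 {G : Type*} {T : Type*} [LinearOrder T]
    (Lc La C : G → ℝ) (U : ℝ → ℝ → T)
    (hLnonneg : ∀ p, 0 ≤ La p) (hCnonneg : ∀ p, 0 ≤ C p)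
    (hUmono : ∀ l l' c c', l ≤ l' → c ≤ c' → U l c ≤ U l' c')
    (hunder : ∀ p : G, La p ≤ Lc p)
    (pstar : G)
    (hmin : ∀ p : G, U (La pstar) (C pstar) ≤ U (La p) (C p))
    (ε : ℝ) (hε : 0 ≤ ε)
    (hgap : Lc pstar - La pstar ≤ ε) :
    ∀ p : G, U (Lc pstar - ε) (C pstar) ≤ U (Lc p) (C p) := by
  intro p
  calc U (Lc pstar - ε) (C pstar) ≤ U (La pstar) (C pstar) :=
        hUmono _ _ _ _ (by linarith) le_rfl
    _ ≤ U (La p) (C p) := hmin p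
    _ ≤ U (Lc p) (C p) := hUmono _ _ _ _ (hunder p) le_rfl
end

section
/- Every program of bounded height is accepted by the abstract finite tree automaton: for the AFTA (Q, Q_f, Δ) constructed from a grammar G, inputs x⃗ = ⟨x₁,…,x_n⟩, and predicates P, every expression e derivable from a symbol s of G with height ≤ b yields a state q^{φ⃗}_s ∈ Q with φ⃗ = ⟨⟦e⟧^P x₁,…,⟦e⟧^P x_n⟩ such that e is accepted by the automaton (Q, {q^{φ⃗}_s}, Δ). -/
/-- Height of an expression: terminals have height 1. -/
def Expr.height {τ σ : Type} : Expr τ σ → ℕ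
  | .term _ => 1
  | .app _ args => 1 + (args.attach.map (fun a => Expr.height a.1)).foldr max 0
termination_by e => sizeOf e
decreasing_by have := List.sizeOf_lt_of_mem a.2; simp; omega

/-- A production `s → f(s₁,…,s_k)` of the DSL grammar. -/
structure Production (N σ : Type) where
  lhs : N
  f : σ
  rhs : List N

/-- Derivation of an expression from a nonterminal `s`: `D s t` allows the
terminal production `s → t`; internal nodes use productions in `Prods`. -/
inductive GDerives {N τ σ : Type} (D : N → τ → Prop)
    (Prods : Set (Production N σ)) : N → Expr τ σ → Prop where
  | term (s : N) (t : τ) : D s t → GDerives D Prods s (.term t)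
  | app (p : Production N σ) (hp : p ∈ Prods) (kids : List (Expr τ σ))
      (h : List.Forall₂ (GDerives D Prods) p.rhs kids) :
      GDerives D Prods p.lhs (.app p.f kids)

/-- Acceptance in the abstract finite tree automaton constructed by the
(Var)/(Const)/(Prod) rules: `AcceptsAt … s φ⃗ e` says that the tree `e` rewrites
(bottom-up) to the state `q^{φ⃗}_s` using the transitions `Δ` of the AFTA built
for inputs `x₁,…,x_n`, predicates `P`, and abstract transformer `F`. -/
inductive AcceptsAt {V I τ σ N : Type} {n : ℕ} (P : Set (Set V))
    (x : Fin n → I) (tsem : τ → I → V) (F : σ → List (Set V) → Set V)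
    (D : N → τ → Prop) (Prods : Set (Production N σ)) :
    N → (Fin n → Set V) → Expr τ σ → Prop where
  | term (s : N) (t : τ) : D s t →
      AcceptsAt P x tsem F D Prods s
        (fun i => alphaP P {tsem t (x i)}) (.term t)
  | app (p : Production N σ) (hp : p ∈ Prods) (kids : List (Expr τ σ))
      (φs : List (Fin n → Set V)) (hlen : p.rhs.length = φs.length)
      (hkids : List.Forall₂ (fun sφ e => AcceptsAt P x tsem F D Prods sφ.1 sφ.2 e)
        (p.rhs.zip φs) kids) :
      AcceptsAt P x tsem F D Prods p.lhs
        (fun i => alphaP P (F p.f (φs.map (fun φ => φ i)))) (.app p.f kids)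


private lemma forall₂_imp_mem {A B : Type} {R S : A → B → Prop} :
    ∀ {l1 : List A} {l2 : List B}, List.Forall₂ R l1 l2 →
    (∀ a b, b ∈ l2 → R a b → S a b) → List.Forall₂ S l1 l2 := by
  intro l1 l2 h
  induction h with
  | nil => intro _; exact .nil
  | cons hab _ ih =>
    intro himp
    exact .cons (himp _ _ List.mem_cons_self hab)
      (ih fun a b hb => himp a b (List.mem_cons_of_mem _ hb))

private lemma forall₂_zip_map {A B C : Type} {Q : A × C → B → Prop} (g : B → C) :
    ∀ {l1 : List A} {l2 : List B}, List.Forall₂ (fun a b => Q (a, g b) b) l1 l2 →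
    List.Forall₂ (fun sφ b => Q sφ b) (l1.zip (l2.map g)) l2 := by
  intro l1 l2 h
  induction h with
  | nil => exact .nil
  | cons hab _ ih => exact .cons hab ih


private lemma gderives_app_inv {N τ σ : Type} {D : N → τ → Prop}
    {Prods : Set (Production N σ)} {s : N} {f : σ} {ks : List (Expr τ σ)}
    (h : GDerives D Prods s (.app f ks)) :
    ∃ p ∈ Prods, p.lhs = s ∧ p.f = f ∧ List.Forall₂ (GDerives D Prods) p.rhs ks := by
  cases h with
  | app p hp kids hk => exact ⟨p, hp, rfl, rfl, hk⟩

private lemma gderives_term_inv {N τ σ : Type} {D : N → τ → Prop}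
    {Prods : Set (Production N σ)} {s : N} {t : τ}
    (h : GDerives D Prods s (Expr.term (σ := σ) t)) : D s t := by
  cases h with
  | term _ _ h => exact h

private theorem go {V I τ σ N : Type} {n : ℕ} (P : Set (Set V))
    (x : Fin n → I) (tsem : τ → I → V) (F : σ → List (Set V) → Set V)
    (D : N → τ → Prop) (Prods : Set (Production N σ)) :
    ∀ (s : N) (e : Expr τ σ), GDerives D Prods s e →
    AcceptsAt P x tsem F D Prods s
      (fun i => absExec P (fun t => tsem t (x i)) F e) e
  | s, .term t, hder => by
    have := AcceptsAt.term (P := P) (x := x) (tsem := tsem) (F := F)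
      (D := D) (Prods := Prods) s t (gderives_term_inv hder)
    simpa [absExec] using this
  | s, .app f ks, hder => by
    obtain ⟨p, hp, rfl, rfl, h⟩ := gderives_app_inv hder
    have hφ : (fun i => absExec P (fun t => tsem t (x i)) F (.app p.f ks))
        = fun i => alphaP P (F p.f
            ((ks.map (fun e i => absExec P (fun t => tsem t (x i)) F e)).map
              (fun φ => φ i))) := by
      funext i
      simp [absExec, List.map_map, Function.comp_def]
    rw [hφ]
    refine AcceptsAt.app p hp ks _ ?_ ?_
    · rw [List.length_map]; exact h.length_eq
    · refine forall₂_zip_map _ (forall₂_imp_mem h ?_)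
      intro s' e' he' hd'
      have hsz : sizeOf e' < sizeOf (Expr.app p.f ks) := by
        have := List.sizeOf_lt_of_mem he'
        simp; omega
      exact go P x tsem F D Prods s' e' hd'
termination_by _ e _ => sizeOf e

/-- Every expression of height at most `b` derivable from a symbol `s` of the
grammar is accepted by the AFTA at the state `q^{φ⃗}_s` whose abstract vector is
`φ⃗ = ⟨⟦e⟧^P x₁, …, ⟦e⟧^P x_n⟩`. -/
theorem stmt17 {V I τ σ N : Type} {n : ℕ} (P : Set (Set V))
    (x : Fin n → I) (tsem : τ → I → V) (F : σ → List (Set V) → Set V)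
    (D : N → τ → Prop) (Prods : Set (Production N σ))
    (b : ℕ) (s : N) (e : Expr τ σ)
    (hder : GDerives D Prods s e) (hht : e.height ≤ b) :
    AcceptsAt P x tsem F D Prods s
      (fun i => absExec P (fun t => tsem t (x i)) F e) e := by
  exact go P x tsem F D Prods s e hder
end
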